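/- Let F be a finite field of order q^2 with q a power of 2, let π(x) = x^{−q}, and let r, s be nonzero elements of the algebraic closure of F lying in distinct π-orbits P and Q. Then S = Σ_{(u,v) ∈ P×Q} uv/(u−v)^2 lies in the subfield H of order q and Tr_{H/F_2}(S) ≡ |P|·|Q| (mod 2). -/

import Mathlib

/-- For `F` of order `q^2`, `q = 2^m`, and `P`, `Q` distinct `π`-orbits (under
`π(x) = x^{-q}`) of nonzero elements `r`, `s` of the algebraic closure, the sum
`S = Σ_{(u,v)∈P×Q} uv/(u-v)^2` lies in the half field `H` of order `q` (`S^q = S`) and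
`Tr_{H/F_2}(S) = S + S^2 + ⋯ + S^(q/2)` equals `|P|·|Q| mod 2`. -/
theorem stmt10 (m q : ℕ) (hm : 0 < m) (hq : q = 2 ^ m)
    (F : Type) [Field F] [Fintype F] (hF : Fintype.card F = q ^ 2)
    (r s : AlgebraicClosure F) (hr : r ≠ 0) (hs : s ≠ 0)
    (P Q : Finset (AlgebraicClosure F))
    (hP : ∀ x, x ∈ P ↔ ∃ k : ℕ, (fun y : AlgebraicClosure F => (y ^ q)⁻¹)^[k] r = x)
    (hQ : ∀ x, x ∈ Q ↔ ∃ k : ℕ, (fun y : AlgebraicClosure F => (y ^ q)⁻¹)^[k] s = x)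
    (hPQ : P ≠ Q) :
    let S : AlgebraicClosure F := ∑ u ∈ P, ∑ v ∈ Q, u * v / (u - v) ^ 2
    S ^ q = S ∧
      ∑ i ∈ Finset.range m, S ^ 2 ^ i = ((P.card * Q.card : ℕ) : AlgebraicClosure F) := by
  classical
  intro S
  have hS : S = ∑ u ∈ P, ∑ v ∈ Q, u * v / (u - v) ^ 2 := rfl
  -- characteristic 2
  haveI hcF : CharP F (ringChar F) := ringChar.charP F
  obtain ⟨n, hpn, hcard⟩ := FiniteField.card F (ringChar F)
  have hp2 : ringChar F = 2 := by
    have h1 : ringChar F ∣ 2 ^ (2 * m) := by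
      have h2 : (ringChar F) ^ (n : ℕ) = 2 ^ (2 * m) := by
        rw [← hcard, hF, hq, ← pow_mul]; ring_nf
      have h3 : ringChar F ∣ (ringChar F) ^ (n : ℕ) :=
        dvd_pow_self _ n.pos.ne'
      rwa [h2] at h3
    exact (Nat.prime_dvd_prime_iff_eq hpn Nat.prime_two).mp (hpn.dvd_of_dvd_pow h1)
  haveI hcF2 : CharP F 2 := hp2 ▸ hcF
  haveI hcK : CharP (AlgebraicClosure F) 2 := charP_of_injective_algebraMap (algebraMap F (AlgebraicClosure F)).injective 2
  haveI : Fact (Nat.Prime 2) := ⟨Nat.prime_two⟩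
  have h2z : (2 : (AlgebraicClosure F)) = 0 := CharTwo.two_eq_zero
  have hq2 : ∀ x y : (AlgebraicClosure F), (x + y) ^ q = x ^ q + y ^ q := by
    intro x y; rw [hq]; exact add_pow_char_pow x y 2 m
  have hsubpow : ∀ x y : (AlgebraicClosure F), (x - y) ^ q = x ^ q - y ^ q := by
    intro x y
    rw [CharTwo.sub_eq_add, CharTwo.sub_eq_add, hq2]
  have hqne : q ≠ 0 := by rw [hq]; positivity
  have hpowinj : ∀ x y : (AlgebraicClosure F), x ^ q = y ^ q → x = y := by
    intro x y h
    have h1 : (x + y) ^ q = 0 := by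
      rw [hq2, h, CharTwo.add_self_eq_zero]
    have h2 : x + y = 0 := pow_eq_zero_iff hqne |>.mp h1
    rw [← CharTwo.sub_eq_add, sub_eq_zero] at h2
    exact h2
  set π : (AlgebraicClosure F) → (AlgebraicClosure F) := fun y : (AlgebraicClosure F) => (y ^ q)⁻¹ with hπdef
  have hπinj : Function.Injective π := by
    intro x y h
    exact hpowinj _ _ (inv_injective h)
  have hπne : ∀ x : (AlgebraicClosure F), x ≠ 0 → π x ≠ 0 := fun x hx => inv_ne_zero (pow_ne_zero _ hx)
  -- orbit facts
  have orbit_facts : ∀ (r₀ : (AlgebraicClosure F)) (P₀ : Finset (AlgebraicClosure F)), r₀ ≠ 0 →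
      (∀ x, x ∈ P₀ ↔ ∃ k : ℕ, π^[k] r₀ = x) →
      (∀ x ∈ P₀, x ≠ 0) ∧ (P₀.image π = P₀) ∧ (∀ x ∈ P₀, ∃ j, π^[j] x = r₀) := by
    intro r₀ P₀ hr₀ hiff
    have hne : ∀ k : ℕ, π^[k] r₀ ≠ 0 := by
      intro k
      induction k with
      | zero => simpa using hr₀
      | succ k ih =>
        rw [Function.iterate_succ_apply']
        exact hπne _ ih
    have hne' : ∀ x ∈ P₀, x ≠ 0 := by
      intro x hx
      obtain ⟨k, rfl⟩ := (hiff x).mp hx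
      exact hne k
    have hmaps : ∀ x ∈ P₀, π x ∈ P₀ := by
      intro x hx
      obtain ⟨k, rfl⟩ := (hiff x).mp hx
      exact (hiff _).mpr ⟨k + 1, Function.iterate_succ_apply' π k r₀⟩
    have himg : P₀.image π = P₀ := by
      apply Finset.eq_of_subset_of_card_le
      · intro y hy
        obtain ⟨x, hx, rfl⟩ := Finset.mem_image.mp hy
        exact hmaps x hx
      · rw [Finset.card_image_of_injective _ hπinj]
    have hmemk : ∀ k : ℕ, π^[k] r₀ ∈ P₀ := fun k => (hiff _).mpr ⟨k, rfl⟩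
    obtain ⟨i, hi, j, hj, hij, hijeq⟩ :=
      Finset.exists_ne_map_eq_of_card_lt_of_maps_to
        (s := Finset.range (P₀.card + 1)) (t := P₀) (by simp) (fun k _ => hmemk k)
    have key : ∀ i j : ℕ, i < j → π^[i] r₀ = π^[j] r₀ → ∃ d, 0 < d ∧ π^[d] r₀ = r₀ := by
      intro i j hlt h
      refine ⟨j - i, by omega, ?_⟩
      have h1 : π^[i] (π^[j - i] r₀) = π^[i] r₀ := by
        rw [← Function.iterate_add_apply, show i + (j - i) = j by omega]
        exact h.symm
      exact hπinj.iterate i h1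
    have hd : ∃ d, 0 < d ∧ π^[d] r₀ = r₀ := by
      rcases lt_or_gt_of_ne hij with h | h
      · exact key i j h hijeq
      · exact key j i h hijeq.symm
    obtain ⟨d, hd0, hdr⟩ := hd
    refine ⟨hne', himg, ?_⟩
    intro x hx
    obtain ⟨k, rfl⟩ := (hiff x).mp hx
    refine ⟨d * k - k, ?_⟩
    have hk : k ≤ d * k := Nat.le_mul_of_pos_left k hd0
    rw [← Function.iterate_add_apply, show d * k - k + k = d * k by omega,
      Function.iterate_mul]
    exact Function.iterate_fixed hdr k
  obtain ⟨hPne, hPimg, hPcyc⟩ := orbit_facts r P hr hP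
  obtain ⟨hQne, hQimg, hQcyc⟩ := orbit_facts s Q hs hQ
  -- disjointness
  have hdisj : ∀ u ∈ P, ∀ v ∈ Q, u ≠ v := by
    intro u hu v hv huv
    subst huv
    apply hPQ
    obtain ⟨j1, hj1⟩ := hPcyc u hu
    obtain ⟨j2, hj2⟩ := hQcyc u hv
    have hrQ : r ∈ Q := by
      obtain ⟨l, hl⟩ := (hQ u).mp hv
      exact (hQ r).mpr ⟨j1 + l, by rw [Function.iterate_add_apply, hl, hj1]⟩
    have hsP : s ∈ P := by
      obtain ⟨l, hl⟩ := (hP u).mp hu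
      exact (hP s).mpr ⟨j2 + l, by rw [Function.iterate_add_apply, hl, hj2]⟩
    apply Finset.Subset.antisymm
    · intro x hx
      obtain ⟨k, rfl⟩ := (hP x).mp hx
      obtain ⟨l', hl'⟩ := (hQ r).mp hrQ
      exact (hQ _).mpr ⟨k + l', by rw [Function.iterate_add_apply, hl']⟩
    · intro x hx
      obtain ⟨k, rfl⟩ := (hQ x).mp hx
      obtain ⟨l', hl'⟩ := (hP s).mp hsP
      exact (hP _).mpr ⟨k + l', by rw [Function.iterate_add_apply, hl']⟩
  -- Frobenius on sums
  have hfrobsum : ∀ (T : Finset (AlgebraicClosure F)) (f : (AlgebraicClosure F) → (AlgebraicClosure F)) (j : ℕ),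
      (∑ x ∈ T, f x) ^ 2 ^ j = ∑ x ∈ T, (f x) ^ 2 ^ j := by
    intro T f j
    rw [← iterateFrobenius_def, map_sum]
    simp [iterateFrobenius_def]
  have hfrobsum2 : ∀ (T : Finset (AlgebraicClosure F)) (f : (AlgebraicClosure F) → (AlgebraicClosure F)),
      (∑ x ∈ T, f x) ^ 2 = ∑ x ∈ T, (f x) ^ 2 := by
    intro T f
    simpa using hfrobsum T f 1
  -- reindex by π
  have hreidx : ∀ (T : Finset (AlgebraicClosure F)), T.image π = T → ∀ (f : (AlgebraicClosure F) → (AlgebraicClosure F)),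
      ∑ x ∈ T, f x = ∑ x ∈ T, f (π x) := by
    intro T himg f
    conv_lhs => rw [← himg]
    exact Finset.sum_image fun x _ y _ h => hπinj h
  -- key inverse identity
  have hinvkey : ∀ a b : (AlgebraicClosure F), a ≠ 0 → b ≠ 0 → a ≠ b → a⁻¹ / (a⁻¹ - b⁻¹) = b / (a - b) := by
    intro a b ha hb hab
    have h1 : a⁻¹ - b⁻¹ ≠ 0 := by
      simp only [sub_ne_zero]
      exact fun h => hab (by rw [← inv_inv a, h, inv_inv])
    have h2 : a - b ≠ 0 := sub_ne_zero.mpr hab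
    rw [div_eq_div_iff h1 h2, CharTwo.sub_eq_add, CharTwo.sub_eq_add]
    field_simp
    ring
  set A : (AlgebraicClosure F) := ∑ u ∈ P, ∑ v ∈ Q, u / (u - v) with hA
  set N : (AlgebraicClosure F) := ((P.card * Q.card : ℕ) : (AlgebraicClosure F)) with hN
  -- basic nonvanishing for pairs
  have hpair : ∀ u ∈ P, ∀ v ∈ Q, u ≠ 0 ∧ v ≠ 0 ∧ u - v ≠ 0 := by
    intro u hu v hv
    exact ⟨hPne u hu, hQne v hv, sub_ne_zero.mpr (hdisj u hu v hv)⟩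
  have hAq : A ^ q = ∑ u ∈ P, ∑ v ∈ Q, u ^ q / (u - v) ^ q := by
    rw [hA, hq, hfrobsum]
    refine Finset.sum_congr rfl fun u _ => ?_
    rw [hfrobsum]
    refine Finset.sum_congr rfl fun v _ => ?_
    rw [div_pow]
  have hArw : A = ∑ u ∈ P, ∑ v ∈ Q, v ^ q / (u - v) ^ q := by
    rw [hA]
    calc ∑ u ∈ P, ∑ v ∈ Q, u / (u - v)
        = ∑ u ∈ P, ∑ v ∈ Q, (π u) / (π u - π v) := by
          rw [hreidx P hPimg (fun u => ∑ v ∈ Q, u / (u - v))]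
          exact Finset.sum_congr rfl fun u _ =>
            hreidx Q hQimg (fun v => π u / (π u - v))
      _ = ∑ u ∈ P, ∑ v ∈ Q, v ^ q / (u - v) ^ q := by
          refine Finset.sum_congr rfl fun u hu => Finset.sum_congr rfl fun v hv => ?_
          obtain ⟨hu0, hv0, huv⟩ := hpair u hu v hv
          have ha : u ^ q ≠ 0 := pow_ne_zero _ hu0
          have hb : v ^ q ≠ 0 := pow_ne_zero _ hv0
          have hab : u ^ q ≠ v ^ q := fun h => hdisj u hu v hv (hpowinj _ _ h)
          show (u ^ q)⁻¹ / ((u ^ q)⁻¹ - (v ^ q)⁻¹) = v ^ q / (u - v) ^ q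
          rw [hsubpow]
          exact hinvkey _ _ ha hb hab
  have hAAq : A + A ^ q = N := by
    rw [hAq]
    conv_lhs => rw [hArw]
    rw [← Finset.sum_add_distrib]
    have : ∀ u ∈ P, (∑ v ∈ Q, v ^ q / (u - v) ^ q) + ∑ v ∈ Q, u ^ q / (u - v) ^ q
        = ∑ v ∈ Q, (1 : (AlgebraicClosure F)) := by
      intro u hu
      rw [← Finset.sum_add_distrib]
      refine Finset.sum_congr rfl fun v hv => ?_
      obtain ⟨hu0, hv0, huv⟩ := hpair u hu v hv
      rw [← add_div]
      rw [show v ^ q + u ^ q = (u - v) ^ q by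
        rw [hsubpow, CharTwo.sub_eq_add, add_comm]]
      exact div_self (pow_ne_zero _ huv)
    rw [Finset.sum_congr rfl this]
    simp [hN, Finset.sum_const, mul_comm]
  have hNN : N ^ 2 = N := by
    rcases Nat.even_or_odd (P.card * Q.card) with he | ho
    · have h0 : N = 0 := by
        rw [hN]
        exact (CharP.cast_eq_zero_iff (AlgebraicClosure F) 2 _).mpr he.two_dvd
      rw [h0]; ring
    · obtain ⟨k, hk⟩ := ho
      have h1 : N = 1 := by
        rw [hN, hk]
        push_cast
        rw [h2z]; ring
      rw [h1]; ring
  -- S = A + A^2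
  have hSA : S = A + A ^ 2 := by
    rw [hS, hA, hfrobsum2]
    rw [← Finset.sum_add_distrib]
    refine Finset.sum_congr rfl fun u hu => ?_
    rw [hfrobsum2, ← Finset.sum_add_distrib]
    refine Finset.sum_congr rfl fun v hv => ?_
    obtain ⟨hu0, hv0, huv⟩ := hpair u hu v hv
    rw [CharTwo.sub_eq_add] at huv ⊢
    have hw2 : (u + v) ^ 2 ≠ 0 := pow_ne_zero _ huv
    rw [div_pow, div_add_div _ _ huv hw2, div_eq_div_iff hw2 (mul_ne_zero huv hw2)]
    linear_combination (-(u ^ 2 * (u + v) ^ 3)) * h2z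
  have hAqA : A ^ q = A + N := by
    rw [← hAAq, ← add_assoc, CharTwo.add_self_eq_zero, zero_add]
  constructor
  · -- S^q = S
    have hcomm : (A ^ 2) ^ q = (A ^ q) ^ 2 := by
      rw [← pow_mul, ← pow_mul, mul_comm]
    rw [hSA, hq2, hcomm, hAqA, CharTwo.add_sq, hNN]
    linear_combination N * h2z
  · -- trace
    have hgS : ∀ i : ℕ, S ^ 2 ^ i = A ^ 2 ^ i + A ^ 2 ^ (i + 1) := by
      intro i
      rw [hSA, add_pow_char_pow, ← pow_mul,
        show 2 * 2 ^ i = 2 ^ (i + 1) by rw [pow_succ]; ring]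
    calc ∑ i ∈ Finset.range m, S ^ 2 ^ i
        = ∑ i ∈ Finset.range m, (A ^ 2 ^ (i + 1) - A ^ 2 ^ i) := by
          refine Finset.sum_congr rfl fun i _ => ?_
          rw [hgS i, CharTwo.sub_eq_add, add_comm]
      _ = A ^ 2 ^ m - A ^ 2 ^ 0 := Finset.sum_range_sub (fun i => A ^ 2 ^ i) m
      _ = A ^ q + A := by rw [CharTwo.sub_eq_add, pow_zero, pow_one, hq]
      _ = N := by rw [add_comm]; exact hAAq
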